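/- Let X be a nonempty clopen subset of Z_p^n. The restrictions to X of polynomial functions Z_p^n → Q_p are dense in the space C(X, Q_p) of continuous functions with the sup-norm. -/

import Mathlib

open Polynomial
open scoped fwdDiff

namespace Stmt6Aux

variable {p : ℕ} [Fact p.Prime]

noncomputable instance (p : ℕ) [Fact p.Prime] : IsBoundedSMul ℤ_[p] ℚ_[p] :=
  IsBoundedSMul.of_norm_smul_le fun r x => by
    rw [Algebra.smul_def, norm_mul]
    exact le_of_eq (by rw [← PadicInt.padic_norm_e_of_padicInt]; rfl)

/-- A polynomial over `ℚ_[p]` whose evaluation at `x : ℤ_[p]` is the Mahler basis function. -/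
noncomputable def mahlerPoly (p : ℕ) [Fact p.Prime] (k : ℕ) : Polynomial ℚ_[p] :=
  Polynomial.C ((k.factorial : ℚ_[p])⁻¹) *
    (ascPochhammer ℚ_[p] k).comp (Polynomial.X - Polynomial.C (k : ℚ_[p]) + 1)

lemma coe_eval_ascPochhammer (k : ℕ) (y : ℤ_[p]) :
    (((ascPochhammer ℤ_[p] k).eval y : ℤ_[p]) : ℚ_[p])
      = (ascPochhammer ℚ_[p] k).eval ((y : ℚ_[p])) := by
  have h := Polynomial.eval₂_at_apply (p := ascPochhammer ℤ_[p] k)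
    (PadicInt.Coe.ringHom (p := p)) y
  rw [← Polynomial.eval_map, ascPochhammer_map] at h
  exact h.symm

lemma mahlerPoly_eval (k : ℕ) (x : ℤ_[p]) :
    (mahlerPoly p k).eval (x : ℚ_[p]) = mahler k x := by
  have hfac : (k.factorial : ℚ_[p]) ≠ 0 := Nat.cast_ne_zero.mpr k.factorial_ne_zero
  have h1 : k.factorial • Ring.choose x k = (ascPochhammer ℤ_[p] k).eval (x - k + 1) := by
    rw [Ring.choose, Ring.factorial_nsmul_multichoose_eq_ascPochhammer,
      Polynomial.ascPochhammer_smeval_eq_eval]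
  have h2 : (k.factorial : ℚ_[p]) * ((Ring.choose x k : ℤ_[p]) : ℚ_[p])
      = (ascPochhammer ℚ_[p] k).eval ((x : ℚ_[p]) - k + 1) := by
    calc (k.factorial : ℚ_[p]) * ((Ring.choose x k : ℤ_[p]) : ℚ_[p])
        = ((k.factorial • Ring.choose x k : ℤ_[p]) : ℚ_[p]) := by
          push_cast [nsmul_eq_mul]; ring
      _ = (((ascPochhammer ℤ_[p] k).eval (x - k + 1) : ℤ_[p]) : ℚ_[p]) := by
          exact_mod_cast congrArg (fun t : ℤ_[p] => (t : ℚ_[p])) h1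
      _ = (ascPochhammer ℚ_[p] k).eval (((x - k + 1 : ℤ_[p]) : ℚ_[p])) :=
          coe_eval_ascPochhammer k _
      _ = (ascPochhammer ℚ_[p] k).eval ((x : ℚ_[p]) - k + 1) := by push_cast; ring_nf
  rw [mahler_apply, mahlerPoly]
  rw [Polynomial.eval_mul, Polynomial.eval_C, Polynomial.eval_comp]
  simp only [Polynomial.eval_add, Polynomial.eval_sub, Polynomial.eval_X, Polynomial.eval_C,
    Polynomial.eval_one]
  rw [← h2, ← mul_assoc, inv_mul_cancel₀ hfac, one_mul]

lemma norm_mahler_apply_le (k : ℕ) (x : ℤ_[p]) : ‖(mahler k x : ℚ_[p])‖ ≤ 1 := by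
  rw [mahler_apply, PadicInt.padic_norm_e_of_padicInt]
  exact PadicInt.norm_le_one _

/-- Density of polynomials in `C(ℤ_[p]^n, ℚ_[p])`. -/
lemma polyDense (p : ℕ) [Fact p.Prime] :
    ∀ (n : ℕ) (F : C((Fin n → ℤ_[p]), ℚ_[p])) (ε : ℝ), 0 < ε →
    ∃ g : MvPolynomial (Fin n) ℚ_[p],
      ∀ x : Fin n → ℤ_[p], ‖F x - MvPolynomial.eval (fun i => ((x i : ℚ_[p]))) g‖ ≤ ε := by
  intro n
  induction n with
  | zero =>
    intro F ε hε
    refine ⟨MvPolynomial.C (F (fun i => i.elim0)), fun x => ?_⟩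
    have hx : x = (fun i => i.elim0) := Subsingleton.elim _ _
    rw [hx, MvPolynomial.eval_C, sub_self, norm_zero]
    exact hε.le
  | succ n IH =>
    intro F ε hε
    have hcons : Continuous
        (fun q : ℤ_[p] × (Fin n → ℤ_[p]) => (Fin.cons q.1 q.2 : Fin (n+1) → ℤ_[p])) := by
      refine continuous_pi fun i => ?_
      refine Fin.cases ?_ (fun j => ?_) i
      · simpa only [Fin.cons_zero] using continuous_fst
      · simp only [Fin.cons_succ]; exact (continuous_apply j).comp continuous_snd
    let Φ : C(ℤ_[p] × (Fin n → ℤ_[p]), ℚ_[p]) := F.comp ⟨_, hcons⟩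
    let Φc : C(ℤ_[p], C((Fin n → ℤ_[p]), ℚ_[p])) := Φ.curry
    have hsum := (PadicInt.hasSum_mahler Φc).tendsto_sum_nat
    rw [Metric.tendsto_atTop] at hsum
    obtain ⟨K, hK⟩ := hsum ε hε
    have hKK := hK K le_rfl
    set S : C(ℤ_[p], C((Fin n → ℤ_[p]), ℚ_[p])) :=
      ∑ k ∈ Finset.range K, PadicInt.mahlerTerm ((fwdDiff (1:ℤ_[p]))^[k] (⇑Φc) 0) k with hS
    have hSd : ‖Φc - S‖ ≤ ε := by
      rw [← dist_eq_norm, dist_comm]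
      exact hKK.le
    choose G hG using fun k : ℕ => IH ((fwdDiff (1:ℤ_[p]))^[k] (⇑Φc) 0) ε hε
    refine ⟨∑ k ∈ Finset.range K,
      (mahlerPoly p k).eval₂ MvPolynomial.C (MvPolynomial.X 0) *
        MvPolynomial.rename Fin.succ (G k), fun x => ?_⟩
    set v : Fin (n+1) → ℚ_[p] := fun i => (x i : ℚ_[p]) with hv
    have hxc : (Fin.cons (x 0) (Fin.tail x) : Fin (n+1) → ℤ_[p]) = x := Fin.cons_self_tail x
    have hΦc : Φc (x 0) (Fin.tail x) = F x := by
      show F (Fin.cons (x 0) (Fin.tail x)) = F x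
      rw [hxc]
    -- evaluation of the candidate polynomial
    have heval : MvPolynomial.eval v (∑ k ∈ Finset.range K,
        (mahlerPoly p k).eval₂ MvPolynomial.C (MvPolynomial.X 0) *
          MvPolynomial.rename Fin.succ (G k))
        = ∑ k ∈ Finset.range K,
          (mahler k (x 0) : ℚ_[p]) * MvPolynomial.eval (v ∘ Fin.succ) (G k) := by
      rw [map_sum]
      refine Finset.sum_congr rfl fun k _ => ?_
      rw [map_mul, MvPolynomial.eval_rename]
      congr 1
      have h5 := Polynomial.hom_eval₂ (mahlerPoly p k) MvPolynomial.C
        (MvPolynomial.eval v) (MvPolynomial.X 0)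
      rw [h5]
      have hcomp : (MvPolynomial.eval v).comp (MvPolynomial.C (σ := Fin (n+1))) =
          RingHom.id ℚ_[p] := by
        ext a
        simp
      rw [hcomp, MvPolynomial.eval_X, ← mahlerPoly_eval k (x 0)]
      rfl
    rw [heval]
    -- split the error into two parts
    have hsplit : F x - ∑ k ∈ Finset.range K,
          (mahler k (x 0) : ℚ_[p]) * MvPolynomial.eval (v ∘ Fin.succ) (G k)
        = (Φc (x 0) (Fin.tail x) - S (x 0) (Fin.tail x))
          + ∑ k ∈ Finset.range K, (mahler k (x 0) : ℚ_[p]) *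
              (((fwdDiff (1:ℤ_[p]))^[k] (⇑Φc) 0) (Fin.tail x) - MvPolynomial.eval (v ∘ Fin.succ) (G k)) := by
      have hSx : S (x 0) (Fin.tail x)
          = ∑ k ∈ Finset.range K,
              (mahler k (x 0) : ℚ_[p]) * ((fwdDiff (1:ℤ_[p]))^[k] (⇑Φc) 0) (Fin.tail x) := by
        rw [hS]
        simp only [ContinuousMap.coe_sum, Finset.sum_apply, PadicInt.mahlerTerm_apply]
        simp [smul_eq_mul, Algebra.smul_def]
      rw [hSx, hΦc]
      simp only [mul_sub, Finset.sum_sub_distrib]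
      ring
    rw [hsplit]
    refine (IsUltrametricDist.norm_add_le_max _ _).trans (max_le ?_ ?_)
    · calc ‖Φc (x 0) (Fin.tail x) - S (x 0) (Fin.tail x)‖
          = ‖(Φc (x 0) - S (x 0)) (Fin.tail x)‖ := by simp
        _ ≤ ‖Φc (x 0) - S (x 0)‖ := ContinuousMap.norm_coe_le_norm _ _
        _ = ‖(Φc - S) (x 0)‖ := by simp
        _ ≤ ‖Φc - S‖ := ContinuousMap.norm_coe_le_norm _ _
        _ ≤ ε := hSd
    · refine IsUltrametricDist.norm_sum_le_of_forall_le_of_nonneg hε.le fun k _ => ?_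
      rw [norm_mul]
      calc ‖(mahler k (x 0) : ℚ_[p])‖ *
            ‖((fwdDiff (1:ℤ_[p]))^[k] (⇑Φc) 0) (Fin.tail x) - MvPolynomial.eval (v ∘ Fin.succ) (G k)‖
          ≤ 1 * ε := by
            apply mul_le_mul (norm_mahler_apply_le k (x 0)) ?_ (norm_nonneg _) zero_le_one
            exact hG k (Fin.tail x)
        _ = ε := one_mul ε

end Stmt6Aux

theorem stmt_6 (p : ℕ) [Fact p.Prime] (n : ℕ)
    (X : Set (Fin n → ℤ_[p])) (hX : IsClopen X) (hne : X.Nonempty)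
    (f : X → ℚ_[p]) (hf : Continuous f) :
    ∀ ε : ℝ, 0 < ε → ∃ g : MvPolynomial (Fin n) ℚ_[p],
      ∀ x : X, ‖f x - MvPolynomial.eval (fun i => ((x.1 i : ℚ_[p]))) g‖ ≤ ε := by
  classical
  intro ε hε
  set F0 : (Fin n → ℤ_[p]) → ℚ_[p] := fun z => if h : z ∈ X then f ⟨z, h⟩ else 0 with hF0
  have hcont : Continuous F0 := by
    rw [continuous_iff_continuousAt]
    intro z
    by_cases hz : z ∈ X
    · have h1 : ContinuousOn F0 X := by
        rw [continuousOn_iff_continuous_restrict]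
        have h2 : X.restrict F0 = f := by
          funext w
          simp only [hF0, Set.restrict_apply]
          exact dif_pos w.2
        show Continuous (X.restrict F0); rw [h2]; exact hf
      exact h1.continuousAt (hX.isOpen.mem_nhds hz)
    · have h0 : F0 =ᶠ[nhds z] fun _ => (0 : ℚ_[p]) := by
        filter_upwards [hX.compl.isOpen.mem_nhds hz] with w hw
        simp only [hF0]
        rw [dif_neg hw]
      exact continuousAt_const.congr h0.symm
  obtain ⟨g, hg⟩ := Stmt6Aux.polyDense p n ⟨F0, hcont⟩ ε hε
  refine ⟨g, fun x => ?_⟩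
  have h3 := hg x.1
  simp only [ContinuousMap.coe_mk, hF0] at h3
  rwa [dif_pos x.2] at h3
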